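/- arXiv:1701.07097 — 2 statements merged into one kernel-verified Lean document; each statement's English description precedes it below -/
import Mathlib

section
/- Let O be a complete discrete valuation ring with residue field k and fraction field K of characteristic 0, and let G be a finite group. Let C be a bounded complex of finitely generated projective OG-modules concentrated in degrees r,…,2r whose cohomology over K is concentrated in degree r, i.e. H^i(K⊗C) = 0 for i ≠ r. Suppose moreover that H^i(k⊗C) = 0 for all i > r. Then H^r(C) is a projective OG-module and H^i(C) = 0 for i ≠ r. -/
open MonoidAlgebra TensorProduct



section helpers

variable {O : Type} [CommRing O]

lemma tmul_one_surj (I : Ideal O) {M : Type} [AddCommGroup M] [Module O M]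
    (z : (O ⧸ I) ⊗[O] M) : ∃ x : M, (1 : O ⧸ I) ⊗ₜ[O] x = z := by
  induction z using TensorProduct.induction_on with
  | zero => exact ⟨0, TensorProduct.tmul_zero _ _⟩
  | tmul c x =>
    obtain ⟨c', rfl⟩ := Ideal.Quotient.mk_surjective c
    refine ⟨c' • x, ?_⟩
    rw [TensorProduct.tmul_smul, TensorProduct.smul_tmul', Algebra.smul_def,
      Ideal.Quotient.algebraMap_eq, mul_one]
  | add a b ha hb =>
    obtain ⟨x, rfl⟩ := ha
    obtain ⟨y, rfl⟩ := hb
    exact ⟨x + y, TensorProduct.tmul_add _ _ _⟩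

lemma tmul_one_eq_zero_iff (I : Ideal O) {M : Type} [AddCommGroup M] [Module O M]
    (w : M) : (1 : O ⧸ I) ⊗ₜ[O] w = 0 ↔ w ∈ I • (⊤ : Submodule O M) := by
  have h1 : TensorProduct.quotTensorEquivQuotSMul M I ((1 : O ⧸ I) ⊗ₜ[O] w)
      = Submodule.Quotient.mk w := by
    have h := TensorProduct.quotTensorEquivQuotSMul_mk_tmul (M := M) I 1 w
    simpa using h
  constructor
  · intro h
    rw [← Submodule.Quotient.mk_eq_zero, ← h1, h, map_zero]
  · intro h
    have h2 : Submodule.Quotient.mk w = (0 : M ⧸ I • (⊤ : Submodule O M)) :=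
      (Submodule.Quotient.mk_eq_zero _).mpr h
    exact (LinearEquiv.map_eq_zero_iff _).mp (h1.trans h2)

end helpers

section step

variable {O : Type} [CommRing O] [IsLocalRing O] [IsNoetherianRing O]
variable {R : Type} [Ring R] [Algebra O R]
variable {M₁ M₂ M₃ M₄ : Type}
variable [AddCommGroup M₁] [AddCommGroup M₂] [AddCommGroup M₃] [AddCommGroup M₄]
variable [Module R M₁] [Module R M₂] [Module R M₃] [Module R M₄]
variable [Module O M₁] [Module O M₂] [Module O M₃] [Module O M₄]
variable [IsScalarTower O R M₁] [IsScalarTower O R M₂] [IsScalarTower O R M₃]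
variable [IsScalarTower O R M₄]

theorem nakayama_step
    (f : M₁ →ₗ[R] M₂) (g : M₂ →ₗ[R] M₃) (h : M₃ →ₗ[R] M₄)
    (hgf : ∀ x, g (f x) = 0) (hhg : ∀ x, h (g x) = 0)
    (hfin : Module.Finite O M₂)
    (hM1proj : Module.Projective R M₁)
    (hNproj : Module.Projective R (LinearMap.ker g))
    (hPproj : Module.Projective R (LinearMap.ker h))
    (hrange : LinearMap.range g = LinearMap.ker h)
    (hexact : Function.Exact
      (LinearMap.baseChange (IsLocalRing.ResidueField O) (f.restrictScalars O))
      (LinearMap.baseChange (IsLocalRing.ResidueField O) (g.restrictScalars O))) :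
    Module.Projective R (LinearMap.ker f) ∧ LinearMap.range f = LinearMap.ker g := by
  set I := IsLocalRing.maximalIdeal O with hI
  have hgmem : ∀ x, g x ∈ LinearMap.ker h := fun x => LinearMap.mem_ker.mpr (hhg x)
  set e' : M₂ →ₗ[R] LinearMap.ker h := LinearMap.codRestrict _ g hgmem with he'
  have he'surj : Function.Surjective e' := by
    rintro ⟨y, hy⟩
    rw [← hrange] at hy
    obtain ⟨x, hx⟩ := hy
    exact ⟨x, Subtype.ext hx⟩
  obtain ⟨s, hs⟩ := Module.projective_lifting_property e' LinearMap.id he'surj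
  set u : M₂ →ₗ[R] M₂ := s.comp e' with hu
  have hgu : ∀ y : M₂, g (u y) = g y := by
    intro y
    have h2 := LinearMap.congr_fun hs (e' y)
    simp only [LinearMap.comp_apply, LinearMap.id_apply] at h2
    calc g (u y) = ((e' (s (e' y)) : M₃)) := rfl
    _ = ((e' y : M₃)) := by rw [h2]
    _ = g y := rfl
  have humem : ∀ y : M₂, g (y - u y) = 0 := by
    intro y; rw [map_sub, hgu, sub_self]
  have hu0 : ∀ y : M₂, g y = 0 → u y = 0 := by
    intro y hy
    have h3 : e' y = 0 := by
      apply Subtype.ext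
      simp only [LinearMap.codRestrict_apply, ZeroMemClass.coe_zero]
      exact hy
    rw [hu]; simp [h3]
  set B : Submodule O M₂ := LinearMap.ker (g.restrictScalars O) with hB
  set A : Submodule O M₂ := LinearMap.range (f.restrictScalars O) with hA
  have hBmem : ∀ v : M₂, g v = 0 → v ∈ B := fun v hv => LinearMap.mem_ker.mpr hv
  have key : B ≤ A ⊔ I • B := by
    intro y hy
    have hgy : g y = 0 := hy
    have h0 : LinearMap.baseChange (IsLocalRing.ResidueField O) (g.restrictScalars O)
        ((1 : IsLocalRing.ResidueField O) ⊗ₜ[O] y) = 0 := by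
      rw [LinearMap.baseChange_tmul]
      simp only [LinearMap.restrictScalars_apply, hgy, TensorProduct.tmul_zero]
    obtain ⟨z, hz⟩ := (hexact _).mp h0
    obtain ⟨x, rfl⟩ := tmul_one_surj I z
    have hx : (1 : O ⧸ I) ⊗ₜ[O] (y - f x) = 0 := by
      have h4 : (1 : IsLocalRing.ResidueField O) ⊗ₜ[O] (y - f x)
          = (1 : IsLocalRing.ResidueField O) ⊗ₜ[O] y
            - LinearMap.baseChange (IsLocalRing.ResidueField O) (f.restrictScalars O)
              ((1 : IsLocalRing.ResidueField O) ⊗ₜ[O] x) := by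
        rw [LinearMap.baseChange_tmul, TensorProduct.tmul_sub]; rfl
      change (1 : IsLocalRing.ResidueField O) ⊗ₜ[O] (y - f x) = 0
      exact h4.trans (sub_eq_zero.mpr hz.symm)
    have hmem : y - f x ∈ I • (⊤ : Submodule O M₂) := (tmul_one_eq_zero_iff I _).mp hx
    have hsmul : ∀ w ∈ I • (⊤ : Submodule O M₂), w - u w ∈ I • B := by
      intro w hw
      refine Submodule.smul_induction_on hw ?_ ?_
      · intro c hc n _
        have h5 : c • n - u (c • n) = c • (n - u n) := by
          rw [show u (c • n) = c • u n from (u.restrictScalars O).map_smul c n, smul_sub]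
        rw [h5]
        exact Submodule.smul_mem_smul hc (hBmem _ (humem n))
      · intro w₁ w₂ h₁ h₂
        have h6 : (w₁ + w₂) - u (w₁ + w₂) = (w₁ - u w₁) + (w₂ - u w₂) := by
          rw [map_add]; abel
        rw [h6]; exact Submodule.add_mem _ h₁ h₂
    have h7 : u (y - f x) = 0 := by
      rw [map_sub, hu0 y hgy, hu0 (f x) (hgf x), sub_zero]
    have h8 : y - f x ∈ I • B := by
      have := hsmul _ hmem
      rwa [h7, sub_zero] at this
    have h9 : y = f x + (y - f x) := by abel
    rw [h9]
    exact Submodule.add_mem_sup ⟨x, rfl⟩ h8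
  haveI := hfin
  haveI : IsNoetherian O M₂ := isNoetherian_of_isNoetherianRing_of_finite O M₂
  have hBfg : B.FG := IsNoetherian.noetherian B
  have hjac : I ≤ Ideal.jacobson ⊥ := by
    rw [IsLocalRing.jacobson_eq_maximalIdeal ⊥ bot_ne_top]
  have hBA : B ≤ A := Submodule.le_of_le_smul_of_le_jacobson_bot hBfg hjac key
  have hfr : LinearMap.range f = LinearMap.ker g := by
    apply le_antisymm
    · rintro _ ⟨x, rfl⟩
      exact LinearMap.mem_ker.mpr (hgf x)
    · intro y hy
      obtain ⟨x, hx⟩ := hBA (hBmem y (LinearMap.mem_ker.mp hy))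
      exact ⟨x, hx⟩
  refine ⟨?_, hfr⟩
  have hfmem : ∀ x, f x ∈ LinearMap.ker g := fun x => LinearMap.mem_ker.mpr (hgf x)
  set e : M₁ →ₗ[R] LinearMap.ker g := LinearMap.codRestrict _ f hfmem with he
  have hesurj : Function.Surjective e := by
    rintro ⟨y, hy⟩
    rw [← hfr] at hy
    obtain ⟨x, hx⟩ := hy
    exact ⟨x, Subtype.ext hx⟩
  obtain ⟨s₂, hs₂⟩ := Module.projective_lifting_property e LinearMap.id hesurj
  have hker : ∀ x : M₁, f (x - s₂ (e x)) = 0 := by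
    intro x
    have h2 := LinearMap.congr_fun hs₂ (e x)
    simp only [LinearMap.comp_apply, LinearMap.id_apply] at h2
    have h3 : f (s₂ (e x)) = ((e (s₂ (e x)) : M₂)) := rfl
    rw [map_sub, h3, h2]
    show f x - ((e x : M₂)) = 0
    rw [show ((e x : M₂)) = f x from rfl, sub_self]
  set ρ : M₁ →ₗ[R] LinearMap.ker f :=
    LinearMap.codRestrict _ (LinearMap.id - s₂.comp e)
      (fun x => LinearMap.mem_ker.mpr (by simpa using hker x)) with hρ
  refine Module.Projective.of_split (LinearMap.ker f).subtype ρ ?_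
  ext x
  have h3 : e ((x : M₁)) = 0 := by
    apply Subtype.ext
    simp only [LinearMap.codRestrict_apply, ZeroMemClass.coe_zero]
    exact x.2
  simp [hρ, h3]

end step

/-- Let `O` be a complete DVR with residue field `k` and fraction field `K`
of characteristic `0`, and `G` a finite group.  Let `C = (M, d)` be a bounded complex of
finitely generated projective `OG`-modules concentrated in degrees `r, …, 2r`, whose
cohomology over `K` is concentrated in degree `r` and whose mod-`ℓ` cohomology vanishes
in all degrees `> r`.  Then `H^r(C)` is a projective `OG`-module and `H^i(C) = 0` for
`i ≠ r`.  (Here `H^{i+1}` is expressed via exactness of `d i, d (i+1)`, resp. as the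
quotient `ker (d (i+1)) / im (d i)`; `K ⊗ C` and `k ⊗ C` are the base changes of the
underlying `O`-complex.) -/
theorem stmt5 (O : Type) [CommRing O] [IsDomain O] [IsDiscreteValuationRing O]
    [IsAdicComplete (IsLocalRing.maximalIdeal O) O] [CharZero O]
    (G : Type) [Group G] [Finite G]
    (r : ℤ) (hr : 0 ≤ r)
    (M : ℤ → Type) [∀ i, AddCommGroup (M i)] [∀ i, Module (MonoidAlgebra O G) (M i)]
    [∀ i, Module O (M i)] [∀ i, IsScalarTower O (MonoidAlgebra O G) (M i)]
    (d : ∀ i : ℤ, M i →ₗ[MonoidAlgebra O G] M (i + 1))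
    (hdd : ∀ (i : ℤ) (x : M i), d (i + 1) (d i x) = 0)
    (hconc : ∀ i : ℤ, (i < r ∨ 2 * r < i) → Subsingleton (M i))
    (hfg : ∀ i : ℤ, Module.Finite (MonoidAlgebra O G) (M i))
    (hproj : ∀ i : ℤ, Module.Projective (MonoidAlgebra O G) (M i))
    -- `H^i(K ⊗ C) = 0` for `i ≠ r`:
    (hK : ∀ i : ℤ, i + 1 ≠ r →
      Function.Exact
        (LinearMap.baseChange (FractionRing O) ((d i).restrictScalars O))
        (LinearMap.baseChange (FractionRing O) ((d (i + 1)).restrictScalars O)))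
    -- `H^i(k ⊗ C) = 0` for `i > r`:
    (hk : ∀ i : ℤ, r < i + 1 →
      Function.Exact
        (LinearMap.baseChange (IsLocalRing.ResidueField O) ((d i).restrictScalars O))
        (LinearMap.baseChange (IsLocalRing.ResidueField O) ((d (i + 1)).restrictScalars O))) :
    ∀ i : ℤ,
      (i + 1 = r → Module.Projective (MonoidAlgebra O G)
        (↥(LinearMap.ker (d (i + 1))) ⧸
          Submodule.comap (LinearMap.ker (d (i + 1))).subtype (LinearMap.range (d i)))) ∧
      (i + 1 ≠ r → Function.Exact (d i) (d (i + 1))) := by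
  classical
  haveI : Module.Finite O (MonoidAlgebra O G) := MonoidAlgebra.moduleFinite
  have hfinO : ∀ i : ℤ, Module.Finite O (M i) := by
    intro i
    haveI := hfg i
    exact Module.Finite.trans (MonoidAlgebra O G) (M i)
  -- trivial case: degrees above 2r
  have triv : ∀ j : ℤ, 2 * r < j →
      Module.Projective (MonoidAlgebra O G) (LinearMap.ker (d j)) ∧
      LinearMap.range (d j) = LinearMap.ker (d (j + 1)) := by
    intro j hj
    haveI h1 := hconc j (Or.inr hj)
    haveI h2 := hconc (j + 1) (Or.inr (by omega))
    constructor
    · infer_instance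
    · ext y
      have hy : y = 0 := Subsingleton.elim y 0
      subst hy
      simp
  -- main downward induction
  have aux : ∀ n : ℕ, ∀ j : ℤ, r ≤ j → 2 * r < j + n →
      Module.Projective (MonoidAlgebra O G) (LinearMap.ker (d j)) ∧
      LinearMap.range (d j) = LinearMap.ker (d (j + 1)) := by
    intro n
    induction n with
    | zero =>
      intro j hj hj2
      exact triv j (by omega)
    | succ n ih =>
      intro j hj hj2
      by_cases hcase : 2 * r < j
      · exact triv j hcase
      · have hS1 := ih (j + 1) (by omega) (by omega)
        have hS2 := ih (j + 1 + 1) (by omega) (by omega)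
        haveI := hproj j
        exact nakayama_step (d j) (d (j + 1)) (d (j + 1 + 1)) (hdd j) (hdd (j + 1))
          (hfinO (j + 1)) (hproj j) hS1.1 hS2.1 hS1.2 (hk j (by omega))
  intro i
  constructor
  · intro hi
    have hker : Module.Projective (MonoidAlgebra O G) (LinearMap.ker (d (i + 1))) :=
      (aux (r + 1).toNat (i + 1) (le_of_eq hi.symm) (by omega)).1
    haveI : Subsingleton (M i) := hconc i (Or.inl (by omega))
    have hbot : Submodule.comap (LinearMap.ker (d (i + 1))).subtype (LinearMap.range (d i))
        = ⊥ := by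
      ext x
      simp only [Submodule.mem_comap, LinearMap.mem_range, Submodule.mem_bot]
      constructor
      · rintro ⟨y, hy⟩
        have hy0 : y = 0 := Subsingleton.elim y 0
        subst hy0
        rw [map_zero] at hy
        exact Subtype.ext hy.symm
      · rintro rfl
        exact ⟨0, by simp⟩
    exact Module.Projective.of_equiv (Submodule.quotEquivOfEqBot _ hbot).symm
  · intro hi
    rcases lt_or_gt_of_ne hi with hlt | hgt
    · haveI : Subsingleton (M (i + 1)) := hconc _ (Or.inl hlt)
      rw [LinearMap.exact_iff]
      ext y
      have hy : y = 0 := Subsingleton.elim y 0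
      subst hy
      simp
    · rw [LinearMap.exact_iff]
      exact ((aux (2 * r - i + 1).toNat i (by omega) (by omega)).2).symm
end

section
/- Let T be a Brauer tree with multiplicity m and let d > 1 divide m. The unfolded tree ∧^d T carries an automorphism σ of order d fixing the new exceptional vertex and permuting the d copies of T∖{v_x} cyclically, and the quotient planar tree (∧^d T)/⟨σ⟩ is isomorphic to T as a planar tree with exceptional vertex. -/
open Fin.NatCast in
private lemma fin_iter_add {E : Type} {d : ℕ} [NeZero d] (j : ℕ) (e : E) (i : Fin d) :
    (fun p : E × Fin d => (p.1, p.2 + 1))^[j] (e, i) = (e, i + (j : Fin d)) := by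
  induction j with
  | zero => simp
  | succ n ih =>
      rw [Function.iterate_succ_apply', ih]
      have : ((n + 1 : ℕ) : Fin d) = (n : Fin d) + 1 := by push_cast; ring
      rw [this]
      simp [add_assoc]

private lemma opt_iter_none {α : Type} (g : α → α) (j : ℕ) :
    (Option.map g)^[j] none = none := by
  induction j with
  | zero => rfl
  | succ n ih => rw [Function.iterate_succ_apply', ih]; rfl

private lemma opt_iter_some {α : Type} (g : α → α) (j : ℕ) (x : α) :
    (Option.map g)^[j] (some x) = some (g^[j] x) := by
  induction j with
  | zero => rfl
  | succ n ih => rw [Function.iterate_succ_apply', ih, Function.iterate_succ_apply']; rfl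

private lemma fin_val_add_one {d : ℕ} [NeZero d] (i : Fin d) (h : (i : ℕ) + 1 < d) :
    ((i + 1 : Fin d) : ℕ) = (i : ℕ) + 1 := by
  have h1 : ((1 : Fin d) : ℕ) = 1 := by
    rw [Fin.val_one']; exact Nat.mod_eq_of_lt (by omega)
  rw [Fin.val_add, h1, Nat.mod_eq_of_lt h]

private lemma wrap_aux {E : Type} {d : ℕ} [NeZero d] (g : E → E)
    (f : E × Fin d → E × Fin d)
    (hf1 : ∀ (e : E) (i : Fin d), (i : ℕ) + 1 < d → f (e, i) = (e, i + 1)) :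
    ∀ (j : ℕ) (e : E) (i : Fin d) (h : (i : ℕ) + j < d),
      f^[j] (e, i) = (e, ⟨(i : ℕ) + j, h⟩) := by
  intro j
  induction j with
  | zero => intro e i h; simp
  | succ n ih =>
      intro e i h
      rw [Function.iterate_succ_apply, hf1 e i (by omega)]
      rw [ih e (i + 1) (by rw [fin_val_add_one i (by omega)]; omega)]
      congr 1
      apply Fin.ext
      simp [fin_val_add_one i (by omega : (i:ℕ)+1 < d)]
      omega

private lemma wrap_iter {E : Type} {d : ℕ} [NeZero d] (g : E → E)
    (f : E × Fin d → E × Fin d)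
    (hf1 : ∀ (e : E) (i : Fin d), (i : ℕ) + 1 < d → f (e, i) = (e, i + 1))
    (hf2 : ∀ (e : E) (i : Fin d), (i : ℕ) + 1 = d → f (e, i) = (g e, 0)) :
    ∀ (e : E) (i : Fin d), f^[d] (e, i) = (g e, i) := by
  intro e i
  have hd : 0 < d := Nat.pos_of_ne_zero (NeZero.ne d)
  have hi : (i : ℕ) < d := i.isLt
  have key : f^[(i : ℕ) + ((d - 1 - (i : ℕ)) + 1)] (e, i) = (g e, i) := by
    rw [Function.iterate_add_apply, Function.iterate_succ_apply',
      wrap_aux g f hf1 (d - 1 - (i:ℕ)) e i (by omega),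
      hf2 e ⟨(i:ℕ) + (d - 1 - (i:ℕ)), by omega⟩ (by simp; omega),
      wrap_aux g f hf1 (i:ℕ) (g e) 0 (by simp)]
    congr 1
    apply Fin.ext
    simp
  calc f^[d] (e, i) = f^[(i : ℕ) + ((d - 1 - (i : ℕ)) + 1)] (e, i) := by
        congr 1; omega
    _ = (g e, i) := key



/-- The combinatorial data of a Brauer tree: a (planar) tree with a cyclic ordering
`succ v` of the edges at each vertex `v`, a multiplicity `mult`, and an exceptional
vertex `exc`. -/
structure BrauerTreeC where
  Vtx : Type
  Edge : Type
  ends : Edge → Vtx × Vtx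
  succ : Vtx → Edge → Edge
  mult : ℕ
  exc : Vtx

namespace BrauerTreeC

/-- The unfolding `∧^d T` of a Brauer tree `T`: the exceptional vertex becomes `none`,
its complement is replaced by `d` copies of `T ∖ {v_x}`, each edge of `T` acquires `d`
copies, and the cyclic ordering at the new exceptional vertex is
`(l₁,0),…,(l₁,d−1),(l₂,0),…,(l_r,d−1)`.  The multiplicity becomes `mult / d`. -/
noncomputable def Unfold (T : BrauerTreeC) (d : ℕ) [NeZero d] : BrauerTreeC := by
  classical
  exact {
  Vtx := Option ({v : T.Vtx // v ≠ T.exc} × Fin d)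
  Edge := T.Edge × Fin d
  ends := fun ei =>
    ((if h : (T.ends ei.1).1 = T.exc then none else some (⟨(T.ends ei.1).1, h⟩, ei.2)),
     (if h : (T.ends ei.1).2 = T.exc then none else some (⟨(T.ends ei.1).2, h⟩, ei.2)))
  succ := fun ov ei =>
    match ov with
    | none => if ((ei.2 : ℕ) + 1 < d) then (ei.1, ei.2 + 1) else (T.succ T.exc ei.1, 0)
    | some p => (T.succ p.1.1 ei.1, ei.2)
  mult := T.mult / d
  exc := none }

end BrauerTreeC

open Classical in
private lemma unfold_ends (T : BrauerTreeC) (d : ℕ) [NeZero d] (e : T.Edge) (i : Fin d) :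
    (T.Unfold d).ends (e, i) =
    ((if h : (T.ends e).1 = T.exc then none else some (⟨(T.ends e).1, h⟩, i)),
     (if h : (T.ends e).2 = T.exc then none else some (⟨(T.ends e).2, h⟩, i))) := rfl

private lemma unfold_succ_exc (T : BrauerTreeC) (d : ℕ) [NeZero d] (e : T.Edge) (i : Fin d) :
    (T.Unfold d).succ (T.Unfold d).exc (e, i) =
    (if ((i : ℕ) + 1 < d) then (e, i + 1) else (T.succ T.exc e, 0)) := rfl

/-- Let `T` be a Brauer tree with multiplicity `m` and let `d > 1` divide
`m`.  The unfolded tree `∧^d T` carries an automorphism `σ` of order `d` fixing the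
exceptional vertex and permuting the `d` copies of `T ∖ {v_x}` cyclically, and the
quotient of `∧^d T` by `⟨σ⟩` is isomorphic to `T` as a planar tree with exceptional
vertex (the quotient maps `qV, qE` have the `σ`-orbits as fibres, commute with
incidence, preserve the cyclic orderings at non-exceptional vertices, and collapse the
cyclic ordering at the exceptional vertex `d`-fold onto that of `T`). -/
theorem stmt8 (T : BrauerTreeC) (d : ℕ) [NeZero d] (hd : 1 < d) (hdvd : d ∣ T.mult)
    (hE : Nonempty T.Edge) :
    ∃ (σV : (T.Unfold d).Vtx → (T.Unfold d).Vtx)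
      (σE : (T.Unfold d).Edge → (T.Unfold d).Edge),
      Function.Bijective σV ∧ Function.Bijective σE ∧
      -- σ is a graph automorphism:
      (∀ e : (T.Unfold d).Edge, (T.Unfold d).ends (σE e) =
        (σV ((T.Unfold d).ends e).1, σV ((T.Unfold d).ends e).2)) ∧
      -- fixing the exceptional vertex and permuting the copies cyclically:
      σV (T.Unfold d).exc = (T.Unfold d).exc ∧
      (∀ p : {v : T.Vtx // v ≠ T.exc} × Fin d, σV (some p) = some (p.1, p.2 + 1)) ∧
      (∀ (e : T.Edge) (i : Fin d), σE (e, i) = (e, i + 1)) ∧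
      -- σ preserves the planar structure at the non-exceptional vertices:
      (∀ (p : {v : T.Vtx // v ≠ T.exc} × Fin d) (e : (T.Unfold d).Edge),
        (T.Unfold d).succ (σV (some p)) (σE e) = σE ((T.Unfold d).succ (some p) e)) ∧
      -- σ has order exactly d:
      σE^[d] = id ∧ σV^[d] = id ∧ (∀ j : ℕ, 0 < j → j < d → σE^[j] ≠ id) ∧
      -- the quotient by ⟨σ⟩ is T:
      ∃ (qV : (T.Unfold d).Vtx → T.Vtx) (qE : (T.Unfold d).Edge → T.Edge),
        Function.Surjective qV ∧ Function.Surjective qE ∧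
        (∀ x y : (T.Unfold d).Vtx, qV x = qV y ↔ ∃ j : ℕ, σV^[j] x = y) ∧
        (∀ x y : (T.Unfold d).Edge, qE x = qE y ↔ ∃ j : ℕ, σE^[j] x = y) ∧
        qV (T.Unfold d).exc = T.exc ∧
        (∀ e : (T.Unfold d).Edge, T.ends (qE e) =
          (qV ((T.Unfold d).ends e).1, qV ((T.Unfold d).ends e).2)) ∧
        (∀ (p : {v : T.Vtx // v ≠ T.exc} × Fin d) (e : (T.Unfold d).Edge),
          qE ((T.Unfold d).succ (some p) e) = T.succ (p.1 : T.Vtx) (qE e)) ∧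
        (∀ (e : T.Edge) (i : Fin d),
          ((T.Unfold d).succ (T.Unfold d).exc)^[d] (e, i) = (T.succ T.exc e, i)) ∧
        (T.Unfold d).mult = T.mult / d := by
  classical
  obtain ⟨e0⟩ := hE
  refine ⟨Option.map (fun p : {v : T.Vtx // v ≠ T.exc} × Fin d => (p.1, p.2 + 1)),
    fun p : T.Edge × Fin d => (p.1, p.2 + 1),
    (Equiv.optionCongr ((Equiv.refl _).prodCongr (Equiv.addRight (1 : Fin d)))).bijective,
    ((Equiv.refl T.Edge).prodCongr (Equiv.addRight (1 : Fin d))).bijective,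
    ?_, rfl, fun p => rfl, fun e i => rfl, fun p e => rfl, ?_, ?_, ?_,
    fun ov => ov.elim T.exc (fun p => p.1.1), fun ei => ei.1,
    ?_, fun e => ⟨(e, 0), rfl⟩, ?_, ?_, rfl, ?_, fun p e => rfl, ?_, rfl⟩
  · -- σ ends equivariance
    rintro ⟨e, i⟩
    show (T.Unfold d).ends (e, i + 1) = _
    simp only [unfold_ends]
    by_cases h1 : (T.ends e).1 = T.exc <;> by_cases h2 : (T.ends e).2 = T.exc <;>
      simp [h1, h2] <;> rfl
  · -- σE^[d] = id
    funext ei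
    obtain ⟨e, i⟩ := ei
    erw [fin_iter_add]
    simp [Fin.natCast_self]
    rfl
  · -- σV^[d] = id
    funext ov
    cases ov with
    | none => exact opt_iter_none _ d
    | some p =>
        erw [opt_iter_some]
        obtain ⟨v, i⟩ := p
        rw [fin_iter_add]
        simp [Fin.natCast_self]
        rfl
  · -- order exactly d
    intro j hj0 hjd h
    have h1 := congrFun h (e0, (0 : Fin d))
    erw [fin_iter_add] at h1
    open Fin.NatCast in
    have h2 : ((0 : Fin d) + (j : Fin d)) = (0 : Fin d) := congrArg Prod.snd h1
    rw [zero_add] at h2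
    open Fin.NatCast in
    have h3 : (j : ℕ) % d = 0 := by
      simpa [Fin.val_natCast] using congrArg Fin.val h2
    rw [Nat.mod_eq_of_lt hjd] at h3
    omega
  · -- qV surjective
    intro v
    by_cases h : v = T.exc
    · exact ⟨none, h.symm⟩
    · exact ⟨some (⟨v, h⟩, 0), rfl⟩
  · -- qV fibres
    intro x y
    cases x with
    | none =>
        cases y with
        | none => exact ⟨fun _ => ⟨0, rfl⟩, fun _ => rfl⟩
        | some q =>
            constructor
            · intro h; exact absurd (show T.exc = (q.1 : T.Vtx) from h).symm q.1.2
            · rintro ⟨j, hj⟩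
              erw [opt_iter_none] at hj
              exact absurd hj (by simp)
    | some p =>
        cases y with
        | none =>
            constructor
            · intro h; exact absurd (show (p.1 : T.Vtx) = T.exc from h) p.1.2
            · rintro ⟨j, hj⟩
              erw [opt_iter_some] at hj
              exact absurd hj (by simp)
        | some q =>
            constructor
            · intro h
              obtain ⟨v, i⟩ := p
              obtain ⟨w, k⟩ := q
              have hv : v = w := Subtype.ext h
              subst hv
              refine ⟨(k - i).val, ?_⟩
              erw [opt_iter_some, fin_iter_add, Fin.cast_val_eq_self]
              congr 2
              exact add_sub_cancel i k
            · rintro ⟨j, hj⟩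
              erw [opt_iter_some] at hj
              obtain ⟨v, i⟩ := p
              erw [fin_iter_add] at hj
              have h2 := Option.some_injective _ hj
              exact congrArg (fun z => (z.1 : T.Vtx)) h2
  · -- qE fibres
    rintro ⟨e, i⟩ ⟨f, k⟩
    constructor
    · intro h
      have he : e = f := h
      subst he
      refine ⟨(k - i).val, ?_⟩
      erw [fin_iter_add, Fin.cast_val_eq_self]
      congr 1
      exact add_sub_cancel i k
    · rintro ⟨j, hj⟩
      erw [fin_iter_add] at hj
      show e = f
      exact congrArg Prod.fst hj
  · -- q ends compatibility
    rintro ⟨e, i⟩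
    simp only [unfold_ends]
    show T.ends e = _
    rw [Prod.ext_iff]
    constructor
    · by_cases h1 : (T.ends e).1 = T.exc <;> simp [h1, Option.elim]
    · by_cases h2 : (T.ends e).2 = T.exc <;> simp [h2, Option.elim]
  · -- d-fold collapse of succ at exceptional vertex
    intro e i
    refine wrap_iter (T.succ T.exc) ((T.Unfold d).succ (T.Unfold d).exc) ?_ ?_ e i
    · intro e' i' h
      rw [unfold_succ_exc, if_pos h]
    · intro e' i' h
      rw [unfold_succ_exc, if_neg (by omega)]
end
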